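/- Let Q ∈ ℝ^{m×m} be a nonnegative matrix whose row sums satisfy ∑_l Q_{il} ≤ 1 for every i, and suppose that for every index i there exists an index j with ∑_l Q_{jl} < 1 such that either j = i or there is a path from i to j through positive entries of Q. Then the spectral radius of Q is strictly less than 1; in particular I − Q is invertible and (I − Q)^{-1} = ∑_{l≥0} Q^l is nonnegative. -/

import Mathlib

open Matrix

/-- A substochastic nonnegative matrix from every row of which a
deficient row (row sum < 1) is reachable has spectral radius < 1; hence `I − Q`
is invertible with nonnegative inverse `∑_{l≥0} Q^l`. -/
theorem stmt_3 {m : ℕ}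
    (Q : Matrix (Fin m) (Fin m) ℝ)
    (hQnn : ∀ i j, 0 ≤ Q i j)
    (hsub : ∀ i, ∑ l, Q i l ≤ 1)
    (hreach : ∀ i : Fin m, ∃ j : Fin m, (∑ l, Q j l < 1) ∧
      (j = i ∨ Relation.TransGen (fun a b => 0 < Q a b) i j)) :
    (∀ z : ℂ, (∃ v : Fin m → ℂ, v ≠ 0 ∧ (Q.map (Complex.ofReal)).mulVec v = z • v) →
      ‖z‖ < 1) ∧
    IsUnit (1 - Q) ∧
    (1 - Q)⁻¹ = (∑' l : ℕ, Q ^ l) ∧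
    (∀ i j, 0 ≤ (1 - Q)⁻¹ i j) := by
  rcases Nat.eq_zero_or_pos m with hm | hm
  · subst hm
    haveI : Subsingleton (Matrix (Fin 0) (Fin 0) ℝ) :=
      ⟨fun a b => by ext i j; exact i.elim0⟩
    refine ⟨?_, isUnit_of_subsingleton _, Subsingleton.elim _ _, fun i j => i.elim0⟩
    rintro z ⟨v, hv, -⟩
    exact absurd (funext fun i => i.elim0) hv
  -- Main case : m > 0
  have i0 : Fin m := ⟨0, hm⟩
  set R : ℕ → Fin m → ℝ := fun n i => ∑ j, (Q ^ n) i j with hRdef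
  have hQpow_nn : ∀ n i j, 0 ≤ (Q ^ n) i j := by
    intro n
    induction n with
    | zero =>
      intro i j
      simp only [pow_zero, Matrix.one_apply]
      split <;> norm_num
    | succ n ih =>
      intro i j
      rw [pow_succ, Matrix.mul_apply]
      exact Finset.sum_nonneg fun k _ => mul_nonneg (ih i k) (hQnn k j)
  have hR0 : ∀ i, R 0 i = 1 := by
    intro i
    simp [hRdef, Matrix.one_apply]
  have hRnn : ∀ n i, 0 ≤ R n i := fun n i =>
    Finset.sum_nonneg fun j _ => hQpow_nn n i j
  have hRadd : ∀ a b i, R (a + b) i = ∑ k, (Q ^ a) i k * R b k := by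
    intro a b i
    calc R (a + b) i = ∑ j, ∑ k, (Q ^ a) i k * (Q ^ b) k j := by
          simp [hRdef, pow_add, Matrix.mul_apply]
      _ = ∑ k, ∑ j, (Q ^ a) i k * (Q ^ b) k j := Finset.sum_comm
      _ = ∑ k, (Q ^ a) i k * R b k := by simp [hRdef, Finset.mul_sum]
  have hR1le : ∀ i, R 1 i ≤ 1 := by
    intro i
    simpa [hRdef, pow_one] using hsub i
  have hstep : ∀ n i, R (n + 1) i ≤ R n i := by
    intro n i
    rw [hRadd n 1 i]
    calc ∑ k, (Q ^ n) i k * R 1 k ≤ ∑ k, (Q ^ n) i k := by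
          refine Finset.sum_le_sum fun k _ => ?_
          exact mul_le_of_le_one_right (hQpow_nn n i k) (hR1le k)
      _ = R n i := rfl
  have hanti : ∀ i, Antitone fun n => R n i := fun i =>
    antitone_nat_of_succ_le fun n => hstep n i
  have hRle1 : ∀ n i, R n i ≤ 1 := by
    intro n i
    calc R n i ≤ R 0 i := hanti i (Nat.zero_le n)
      _ = 1 := hR0 i
  have hkey : ∀ a b n, 0 < Q a b → R n b < 1 → R (n + 1) a < 1 := by
    intro a b n hab hb
    have h1 : R (n + 1) a = ∑ k, Q a k * R n k := by
      have := hRadd 1 n a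
      simpa [pow_one, Nat.add_comm] using this
    rw [h1]
    calc ∑ k, Q a k * R n k < ∑ k, Q a k * 1 := by
          refine Finset.sum_lt_sum (fun k _ => ?_) ⟨b, Finset.mem_univ b, ?_⟩
          · exact mul_le_mul_of_nonneg_left (hRle1 n k) (hQnn a k)
          · exact mul_lt_mul_of_pos_left hb hab
      _ = ∑ k, Q a k := by simp
      _ ≤ 1 := hsub a
  have hdef : ∀ i, ∃ n, R n i < 1 := by
    intro i
    obtain ⟨j, hj, hcase⟩ := hreach i
    have hj1 : R 1 j < 1 := by simpa [hRdef, pow_one] using hj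
    rcases hcase with rfl | hpath
    · exact ⟨1, hj1⟩
    · induction hpath using Relation.TransGen.head_induction_on with
      | single h => exact ⟨2, hkey _ _ 1 h hj1⟩
      | head h₁ h₂ ih =>
        obtain ⟨n, hn⟩ := ih
        exact ⟨n + 1, hkey _ _ n h₁ hn⟩
  obtain ⟨N, hNlt⟩ : ∃ N, ∀ i, R N i < 1 := by
    choose f hf using hdef
    refine ⟨Finset.univ.sup f, fun i => lt_of_le_of_lt ?_ (hf i)⟩
    exact hanti i (Finset.le_sup (Finset.mem_univ i))
  have hN0 : 0 < N := by
    rcases Nat.eq_zero_or_pos N with h | h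
    · exfalso
      have := hNlt i0
      rw [h, hR0] at this
      linarith
    · exact h
  set c : ℝ := Finset.univ.sup' ⟨i0, Finset.mem_univ i0⟩ (R N) with hcdef
  have hRc : ∀ i, R N i ≤ c := fun i => Finset.le_sup' _ (Finset.mem_univ i)
  have hc1 : c < 1 := (Finset.sup'_lt_iff _).mpr fun i _ => hNlt i
  have hc0 : 0 ≤ c := le_trans (hRnn N i0) (hRc i0)
  have hpowc : ∀ k i, R (k * N) i ≤ c ^ k := by
    intro k
    induction k with
    | zero => intro i; simp [hR0 i]
    | succ k ih =>
      intro i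
      have he : (k + 1) * N = k * N + N := by ring
      rw [he, hRadd]
      calc ∑ j, (Q ^ (k * N)) i j * R N j ≤ ∑ j, (Q ^ (k * N)) i j * c := by
            refine Finset.sum_le_sum fun j _ => ?_
            exact mul_le_mul_of_nonneg_left (hRc j) (hQpow_nn _ i j)
        _ = R (k * N) i * c := by rw [← Finset.sum_mul]
        _ ≤ c ^ k * c := mul_le_mul_of_nonneg_right (ih i) hc0
        _ = c ^ (k + 1) := (pow_succ c k).symm
  have hgen : ∀ n i, R n i ≤ c ^ (n / N) := by
    intro n i
    calc R n i ≤ R ((n / N) * N) i := hanti i (Nat.div_mul_le_self n N)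
      _ ≤ c ^ (n / N) := hpowc (n / N) i
  -- Part 1 : eigenvalue bound
  have part1 : ∀ z : ℂ, (∃ v : Fin m → ℂ, v ≠ 0 ∧
      (Q.map (Complex.ofReal)).mulVec v = z • v) → ‖z‖ < 1 := by
    rintro z ⟨v, hv, heig⟩
    have hMapn : ∀ n, (Q.map (Complex.ofReal)) ^ n = (Q ^ n).map (Complex.ofReal) := by
      intro n
      induction n with
      | zero =>
        ext i j
        simp [Matrix.one_apply, Matrix.map_apply, apply_ite Complex.ofReal]
      | succ n ih =>
        rw [pow_succ, pow_succ, ih]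
        ext i j
        simp [Matrix.mul_apply, Matrix.map_apply]
    have hMn : ∀ n, ((Q.map (Complex.ofReal)) ^ n).mulVec v = z ^ n • v := by
      intro n
      induction n with
      | zero => simp
      | succ n ih =>
        rw [pow_succ', ← Matrix.mulVec_mulVec, ih, Matrix.mulVec_smul, heig,
          smul_smul, ← pow_succ]
    obtain ⟨i1, hne⟩ : ∃ i, v i ≠ 0 := Function.ne_iff.mp hv
    obtain ⟨j0, -, hmax⟩ := Finset.exists_max_image Finset.univ
      (fun i => ‖v i‖) ⟨i1, Finset.mem_univ i1⟩
    have hB : 0 < ‖v j0‖ :=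
      lt_of_lt_of_le (norm_pos_iff.mpr hne) (hmax i1 (Finset.mem_univ i1))
    have h1 : (((Q ^ N).map (Complex.ofReal)).mulVec v) j0 = z ^ N * v j0 := by
      rw [← hMapn, hMn N]
      simp
    have h2 : (((Q ^ N).map (Complex.ofReal)).mulVec v) j0
        = ∑ j, ((Q ^ N) j0 j : ℂ) * v j := by
      simp [Matrix.mulVec, dotProduct, Matrix.map_apply]
    have hkey2 : ‖z‖ ^ N * ‖v j0‖ ≤ c * ‖v j0‖ := by
      calc ‖z‖ ^ N * ‖v j0‖
          = ‖z ^ N * v j0‖ := by rw [norm_mul, norm_pow]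
        _ = ‖∑ j, ((Q ^ N) j0 j : ℂ) * v j‖ := by rw [← h1, h2]
        _ ≤ ∑ j, ‖((Q ^ N) j0 j : ℂ) * v j‖ := norm_sum_le _ _
        _ = ∑ j, (Q ^ N) j0 j * ‖v j‖ := by
            refine Finset.sum_congr rfl fun j _ => ?_
            rw [norm_mul, Complex.norm_real, Real.norm_of_nonneg (hQpow_nn N j0 j)]
        _ ≤ ∑ j, (Q ^ N) j0 j * ‖v j0‖ := by
            refine Finset.sum_le_sum fun j _ => ?_
            exact mul_le_mul_of_nonneg_left (hmax j (Finset.mem_univ j)) (hQpow_nn N j0 j)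
        _ = R N j0 * ‖v j0‖ := by rw [← Finset.sum_mul]
        _ ≤ c * ‖v j0‖ :=
            mul_le_mul_of_nonneg_right (hRc j0) (norm_nonneg _)
    have hzN : ‖z‖ ^ N ≤ c := le_of_mul_le_mul_right hkey2 hB
    by_contra hcon
    push_neg at hcon
    have h1le : (1 : ℝ) ≤ ‖z‖ ^ N := one_le_pow₀ hcon
    linarith
  -- Part 2 : invertibility
  have hdet : (1 - Q).det ≠ 0 := by
    intro h0
    obtain ⟨v, hv, hQv⟩ := Matrix.exists_mulVec_eq_zero_iff.mpr h0
    have hQv' : Q.mulVec v = v := by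
      have h := hQv
      rw [Matrix.sub_mulVec, Matrix.one_mulVec, sub_eq_zero] at h
      exact h.symm
    set w : Fin m → ℂ := fun i => (v i : ℂ) with hw
    have hwne : w ≠ 0 := by
      intro h
      apply hv
      ext i
      have := congrFun h i
      simpa [hw] using this
    have heig : (Q.map (Complex.ofReal)).mulVec w = (1 : ℂ) • w := by
      funext i
      have hvi : ((Q.mulVec v) i : ℂ) = (v i : ℂ) := by rw [hQv']
      simp only [Matrix.mulVec, dotProduct, Matrix.map_apply] at hvi ⊢
      push_cast at hvi ⊢
      simpa [hw] using hvi
    have := part1 1 ⟨w, hwne, heig⟩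
    simp at this
  have hdetU : IsUnit (1 - Q).det := isUnit_iff_ne_zero.mpr hdet
  have hunit : IsUnit (1 - Q) := (Matrix.isUnit_iff_isUnit_det _).mpr hdetU
  -- Part 3 : Neumann series
  set A : Matrix (Fin m) (Fin m) ℝ := (1 - Q)⁻¹ with hA
  have hAinv : (1 - Q) * A = 1 := Matrix.mul_nonsing_inv _ hdetU
  have hSK : ∀ K, (∑ l ∈ Finset.range K, Q ^ l) = A - Q ^ K * A := by
    intro K
    have h1 : (∑ l ∈ Finset.range K, Q ^ l) * (1 - Q) = 1 - Q ^ K := by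
      calc (∑ l ∈ Finset.range K, Q ^ l) * (1 - Q)
          = -((∑ l ∈ Finset.range K, Q ^ l) * (Q - 1)) := by
            rw [mul_sub, mul_sub, mul_one, neg_sub]
        _ = -(Q ^ K - 1) := by rw [geom_sum_mul]
        _ = 1 - Q ^ K := neg_sub _ _
    calc (∑ l ∈ Finset.range K, Q ^ l)
        = (∑ l ∈ Finset.range K, Q ^ l) * ((1 - Q) * A) := by rw [hAinv, mul_one]
      _ = ((∑ l ∈ Finset.range K, Q ^ l) * (1 - Q)) * A := by rw [mul_assoc]
      _ = (1 - Q ^ K) * A := by rw [h1]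
      _ = A - Q ^ K * A := by rw [sub_mul, one_mul]
  have htend0 : Filter.Tendsto (fun K : ℕ => c ^ (K / N)) Filter.atTop (nhds 0) := by
    have h1 : Filter.Tendsto (fun K : ℕ => K / N) Filter.atTop Filter.atTop := by
      refine Filter.tendsto_atTop_atTop.mpr fun b => ⟨N * b, fun K hK => ?_⟩
      exact (Nat.le_div_iff_mul_le hN0).mpr (by rw [Nat.mul_comm]; exact hK)
    exact (tendsto_pow_atTop_nhds_zero_of_lt_one hc0 hc1).comp h1
  have hQKA : ∀ i j, Filter.Tendsto (fun K => (Q ^ K * A) i j) Filter.atTop (nhds 0) := by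
    intro i j
    have hg : Filter.Tendsto (fun K : ℕ => c ^ (K / N) * ∑ k, |A k j|)
        Filter.atTop (nhds 0) := by
      simpa using htend0.mul_const (∑ k, |A k j|)
    refine squeeze_zero_norm (fun K => ?_) hg
    ·
      have hentry : ∀ k, (Q ^ K) i k ≤ c ^ (K / N) := fun k =>
        le_trans (Finset.single_le_sum (fun j' _ => hQpow_nn K i j') (Finset.mem_univ k))
          (hgen K i)
      calc ‖(Q ^ K * A) i j‖ = |∑ k, (Q ^ K) i k * A k j| := by rw [Matrix.mul_apply]; rfl
        _ ≤ ∑ k, |(Q ^ K) i k * A k j| := Finset.abs_sum_le_sum_abs _ _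
        _ = ∑ k, (Q ^ K) i k * |A k j| := by
            refine Finset.sum_congr rfl fun k _ => ?_
            rw [abs_mul, abs_of_nonneg (hQpow_nn K i k)]
        _ ≤ ∑ k, c ^ (K / N) * |A k j| := by
            refine Finset.sum_le_sum fun k _ => ?_
            exact mul_le_mul_of_nonneg_right (hentry k) (abs_nonneg _)
        _ = c ^ (K / N) * ∑ k, |A k j| := by rw [Finset.mul_sum]
  have hStend : ∀ i j, Filter.Tendsto (fun K => ∑ l ∈ Finset.range K, (Q ^ l) i j)
      Filter.atTop (nhds (A i j)) := by
    intro i j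
    have h1 : ∀ K, ∑ l ∈ Finset.range K, (Q ^ l) i j = A i j - (Q ^ K * A) i j := by
      intro K
      have h := congrFun (congrFun (hSK K) i) j
      simpa [Matrix.sum_apply, Matrix.sub_apply] using h
    simp only [h1]
    simpa using tendsto_const_nhds.sub (hQKA i j)
  have hHas : ∀ i j, HasSum (fun l => (Q ^ l) i j) (A i j) := fun i j =>
    (hasSum_iff_tendsto_nat_of_nonneg (fun l => hQpow_nn l i j) _).mpr (hStend i j)
  have hAnn : ∀ i j, 0 ≤ A i j := fun i j =>
    ge_of_tendsto' (hStend i j) fun K => Finset.sum_nonneg fun l _ => hQpow_nn l i j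
  have hmatHas : HasSum (fun l : ℕ => Q ^ l) A :=
    Pi.hasSum.mpr fun i => Pi.hasSum.mpr fun j => hHas i j
  exact ⟨part1, hunit, hmatHas.tsum_eq.symm, hAnn⟩
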